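/- There exist a continuous function f : [0,∞) → ℝ, a polynomial p, and a function r ∈ 𝓡_w with f(ℓ) = p(ℓ)e^ℓ + r(ℓ) for all ℓ ≥ 0 (so f is a weak Friedman–Ramanujan function), such that for every continuous compactly supported function F : ℝ → ℝ, ∫_{(0,∞)³} F(𝔏₈(x₁,x₂,x₃)) sinh(x₁/2) sinh(x₂/2) sinh(x₃/2) dx₁ dx₂ dx₃ = ∫₀^∞ F(ℓ) f(ℓ) dℓ. In other words, the pushforward under 𝔏₈ of the measure sinh(x₁/2)sinh(x₂/2)sinh(x₃/2) dx₁dx₂dx₃ on (0,∞)³ admits a density which is a weak Friedman–Ramanujan function. -/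

import Mathlib

open MeasureTheory Real Set

noncomputable section

/-- The class `𝓡_w^c`: continuous functions on `[0,∞)` whose integral of the modulus up to `n`
is `≤ c₁ (n+1)^c e^{n/2}` for every integer `n ≥ 1`. -/
def memRwC (c : ℝ) (f : ℝ → ℂ) : Prop :=
  ContinuousOn f (Set.Ici 0) ∧
  ∃ c₁ : ℝ, 0 < c₁ ∧ ∀ n : ℕ, 1 ≤ n →
    (∫ s in (0:ℝ)..(n:ℝ), ‖f s‖) ≤ c₁ * ((n:ℝ) + 1) ^ c * Real.exp ((n:ℝ) / 2)

/-- The class `𝓡_w = ⋃_{c ≥ 0} 𝓡_w^c`. -/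
def memRw (f : ℝ → ℂ) : Prop := ∃ c : ℝ, 0 ≤ c ∧ memRwC c f

/-- Inverse hyperbolic cosine: `arcosh y = log (y + √(y² − 1))`. -/
def arcosh (y : ℝ) : ℝ := Real.log (y + Real.sqrt (y ^ 2 - 1))

/-- The figure-eight length function
`𝔏₈(x₁,x₂,x₃) = 2 arcosh(2 cosh(x₁/2)cosh(x₂/2) + cosh(x₃/2))`. -/
def L8 (x₁ x₂ x₃ : ℝ) : ℝ :=
  2 * _root_.arcosh (2 * Real.cosh (x₁ / 2) * Real.cosh (x₂ / 2) + Real.cosh (x₃ / 2))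

lemma arcosh_cosh {x : ℝ} (hx : 0 ≤ x) : _root_.arcosh (Real.cosh x) = x := by
  have h1 : Real.cosh x ^ 2 - 1 = Real.sinh x ^ 2 := by rw [Real.cosh_sq]; ring
  rw [_root_.arcosh, h1, Real.sqrt_sq ((Real.sinh_nonneg_iff).mpr hx), Real.cosh_add_sinh, Real.log_exp]

lemma cosh_arcosh {y : ℝ} (hy : 1 ≤ y) : Real.cosh (_root_.arcosh y) = y := by
  have h0 : (0:ℝ) ≤ y ^ 2 - 1 := by nlinarith
  have hs : Real.sqrt (y ^ 2 - 1) ^ 2 = y ^ 2 - 1 := Real.sq_sqrt h0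
  have hsn : 0 ≤ Real.sqrt (y ^ 2 - 1) := Real.sqrt_nonneg _
  have hpos : 0 < y + Real.sqrt (y ^ 2 - 1) := by nlinarith
  rw [_root_.arcosh, Real.cosh_eq, Real.exp_log hpos, Real.exp_neg, Real.exp_log hpos]
  field_simp
  nlinarith

lemma arcosh_nonneg {y : ℝ} (hy : 1 ≤ y) : 0 ≤ _root_.arcosh y := by
  have : (1:ℝ) ≤ y + Real.sqrt (y ^ 2 - 1) := le_add_of_le_of_nonneg hy (Real.sqrt_nonneg _)
  exact Real.log_nonneg this

lemma arcosh_lt_arcosh {a b : ℝ} (ha : 1 ≤ a) (h : a < b) : _root_.arcosh a < _root_.arcosh b := by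
  have h0a : (0:ℝ) ≤ a ^ 2 - 1 := by nlinarith
  have hsq : Real.sqrt (a ^ 2 - 1) ≤ Real.sqrt (b ^ 2 - 1) := by
    apply Real.sqrt_le_sqrt; nlinarith
  have hpos : 0 < a + Real.sqrt (a ^ 2 - 1) := by
    have := Real.sqrt_nonneg (a ^ 2 - 1); nlinarith
  exact Real.log_lt_log hpos (by linarith)

lemma arcosh_le_arcosh {a b : ℝ} (ha : 1 ≤ a) (h : a ≤ b) : _root_.arcosh a ≤ _root_.arcosh b := by
  rcases eq_or_lt_of_le h with rfl | h
  · exact le_refl _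
  · exact (_root_.arcosh_lt_arcosh ha h).le

lemma arcosh_pos {y : ℝ} (hy : 1 < y) : 0 < _root_.arcosh y := by
  have h := _root_.arcosh_lt_arcosh (le_refl 1) hy
  have h1 : _root_.arcosh 1 = 0 := by
    simp [_root_.arcosh]
  linarith

lemma coshHalf_strictMonoOn : StrictMonoOn (fun x : ℝ => Real.cosh (x / 2)) (Set.Ici 0) := by
  intro a ha b hb hab
  exact Real.cosh_strictMonoOn (by simp only [Set.mem_Ici] at ha ⊢; linarith)
    (by simp only [Set.mem_Ici] at hb ⊢; linarith) (by linarith)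

lemma image_cosh_half : (fun x : ℝ => Real.cosh (x / 2)) '' (Set.Ioi 0) = Set.Ioi 1 := by
  ext u
  constructor
  · rintro ⟨x, hx, rfl⟩
    have : Real.cosh (0/2) < Real.cosh (x/2) :=
      coshHalf_strictMonoOn (Set.mem_Ici.mpr (le_refl 0)) (Set.mem_Ici.mpr (le_of_lt (Set.mem_Ioi.mp hx))) hx
    simpa using this
  · intro hu
    refine ⟨2 * _root_.arcosh u, ?_, ?_⟩
    · exact mul_pos two_pos (_root_.arcosh_pos hu)
    · show Real.cosh (2 * _root_.arcosh u / 2) = u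
      rw [mul_div_cancel_left₀ _ (two_ne_zero)]
      exact _root_.cosh_arcosh hu.le

lemma sub1 (g : ℝ → ℝ) :
    ∫ x in Set.Ioi (0:ℝ), Real.sinh (x / 2) * g (Real.cosh (x / 2))
      = 2 * ∫ u in Set.Ioi (1:ℝ), g u := by
  have hderiv : ∀ x ∈ Set.Ioi (0:ℝ),
      HasDerivWithinAt (fun x : ℝ => Real.cosh (x / 2)) (Real.sinh (x / 2) / 2) (Set.Ioi 0) x := by
    intro x _
    have h : HasDerivAt (fun x : ℝ => Real.cosh (x / 2)) (Real.sinh (x / 2) * (1 / 2)) x := by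
      have := (Real.hasDerivAt_cosh (x / 2)).comp x ((hasDerivAt_id' x).div_const 2); exact this
    simpa [mul_one_div, div_eq_mul_inv] using h.hasDerivWithinAt
  have hinj : Set.InjOn (fun x : ℝ => Real.cosh (x / 2)) (Set.Ioi 0) :=
    (coshHalf_strictMonoOn.mono (Set.Ioi_subset_Ici (le_refl 0))).injOn
  have := MeasureTheory.integral_image_eq_integral_abs_deriv_smul measurableSet_Ioi hderiv hinj g
  rw [image_cosh_half] at this
  rw [this, ← MeasureTheory.integral_const_mul]
  apply MeasureTheory.setIntegral_congr_fun measurableSet_Ioi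
  intro x hx
  have hs : 0 ≤ Real.sinh (x / 2) := Real.sinh_nonneg_iff.mpr (by simp at hx; linarith)
  simp only [smul_eq_mul]
  rw [abs_of_nonneg (by linarith : (0:ℝ) ≤ Real.sinh (x/2)/2)]
  ring

lemma image_cosh_sub {a : ℝ} (ha : 1 ≤ a) :
    (fun ℓ : ℝ => Real.cosh (ℓ / 2) - a) '' (Set.Ioi (2 * _root_.arcosh (a + 1))) = Set.Ioi 1 := by
  have hT0 : 0 ≤ 2 * _root_.arcosh (a + 1) :=
    mul_nonneg zero_le_two (_root_.arcosh_nonneg (by linarith))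
  have hcT : Real.cosh (2 * _root_.arcosh (a + 1) / 2) = a + 1 := by
    rw [mul_div_cancel_left₀ _ (two_ne_zero)]
    exact _root_.cosh_arcosh (by linarith)
  ext u
  constructor
  · rintro ⟨ℓ, hℓ, rfl⟩
    simp only [Set.mem_Ioi] at hℓ ⊢
    have : Real.cosh (2 * _root_.arcosh (a + 1) / 2) < Real.cosh (ℓ / 2) :=
      coshHalf_strictMonoOn (by simpa using hT0) (by simp only [Set.mem_Ici]; linarith) hℓ
    rw [hcT] at this; linarith
  · intro hu
    simp only [Set.mem_Ioi] at hu
    refine ⟨2 * _root_.arcosh (a + u), ?_, ?_⟩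
    · simp only [Set.mem_Ioi]
      have := _root_.arcosh_lt_arcosh (by linarith : (1:ℝ) ≤ a + 1) (by linarith : a + 1 < a + u)
      linarith
    · show Real.cosh (2 * _root_.arcosh (a + u) / 2) - a = u
      rw [mul_div_cancel_left₀ _ (two_ne_zero), _root_.cosh_arcosh (by linarith)]
      ring

lemma sub2 (F : ℝ → ℝ) {a : ℝ} (ha : 1 ≤ a) :
    ∫ u in Set.Ioi (1:ℝ), F (2 * _root_.arcosh (a + u))
      = ∫ ℓ in Set.Ioi (2 * _root_.arcosh (a + 1)), Real.sinh (ℓ / 2) / 2 * F ℓ := by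
  set T := 2 * _root_.arcosh (a + 1) with hTdef
  have hT0 : 0 ≤ T := mul_nonneg zero_le_two (_root_.arcosh_nonneg (by linarith))
  have hderiv : ∀ ℓ ∈ Set.Ioi T,
      HasDerivWithinAt (fun ℓ : ℝ => Real.cosh (ℓ / 2) - a) (Real.sinh (ℓ / 2) / 2)
        (Set.Ioi T) ℓ := by
    intro ℓ _
    have h : HasDerivAt (fun ℓ : ℝ => Real.cosh (ℓ / 2)) (Real.sinh (ℓ / 2) * (1 / 2)) ℓ := by
      have := (Real.hasDerivAt_cosh (ℓ / 2)).comp ℓ ((hasDerivAt_id' ℓ).div_const 2); exact this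
    simpa [mul_one_div, div_eq_mul_inv] using (h.sub_const a).hasDerivWithinAt
  have hinj : Set.InjOn (fun ℓ : ℝ => Real.cosh (ℓ / 2) - a) (Set.Ioi T) := by
    have : StrictMonoOn (fun ℓ : ℝ => Real.cosh (ℓ / 2) - a) (Set.Ioi T) := by
      intro x hx y hy hxy
      have := coshHalf_strictMonoOn (Set.mem_Ici.mpr (le_trans hT0 (le_of_lt hx)))
        (Set.mem_Ici.mpr (le_trans hT0 (le_of_lt hy))) hxy
      simpa using this
    exact this.injOn
  have key := MeasureTheory.integral_image_eq_integral_abs_deriv_smul measurableSet_Ioi hderiv hinj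
    (fun u => F (2 * _root_.arcosh (a + u)))
  rw [image_cosh_sub ha] at key
  rw [key]
  apply MeasureTheory.setIntegral_congr_fun measurableSet_Ioi
  intro ℓ hℓ
  simp only [Set.mem_Ioi] at hℓ
  have hℓ0 : 0 ≤ ℓ := le_trans hT0 hℓ.le
  have hs : 0 ≤ Real.sinh (ℓ / 2) / 2 := by
    have := Real.sinh_nonneg_iff.mpr (by linarith : (0:ℝ) ≤ ℓ / 2); linarith
  have harg : a + (Real.cosh (ℓ / 2) - a) = Real.cosh (ℓ / 2) := by ring
  simp only [smul_eq_mul, harg, abs_of_nonneg hs]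
  rw [_root_.arcosh_cosh (by linarith : (0:ℝ) ≤ ℓ / 2)]
  ring_nf

lemma indicator_form (F : ℝ → ℝ) {a : ℝ} (ha : 1 ≤ a) :
    ∫ ℓ in Set.Ioi (2 * _root_.arcosh (a + 1)), Real.sinh (ℓ / 2) / 2 * F ℓ
      = ∫ ℓ in Set.Ioi (0:ℝ),
          Set.indicator {ℓ : ℝ | a + 1 < Real.cosh (ℓ / 2)}
            (fun ℓ => Real.sinh (ℓ / 2) / 2 * F ℓ) ℓ := by
  have hmeas : MeasurableSet {ℓ : ℝ | a + 1 < Real.cosh (ℓ / 2)} := by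
    have : IsOpen {ℓ : ℝ | a + 1 < Real.cosh (ℓ / 2)} :=
      isOpen_lt continuous_const (Real.continuous_cosh.comp (continuous_id.div_const 2))
    exact this.measurableSet
  have hcT : Real.cosh (2 * _root_.arcosh (a + 1) / 2) = a + 1 := by
    rw [mul_div_cancel_left₀ _ (two_ne_zero)]
    exact _root_.cosh_arcosh (by linarith)
  have hTpos : 0 < 2 * _root_.arcosh (a + 1) :=
    mul_pos two_pos (_root_.arcosh_pos (by linarith))
  have hset : Set.Ioi (0:ℝ) ∩ {ℓ : ℝ | a + 1 < Real.cosh (ℓ / 2)}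
      = Set.Ioi (2 * _root_.arcosh (a + 1)) := by
    ext ℓ
    simp only [Set.mem_Ioi, Set.mem_inter_iff, Set.mem_setOf_eq]
    constructor
    · rintro ⟨hℓ0, hc⟩
      by_contra hle
      push_neg at hle
      have h2 := coshHalf_strictMonoOn.monotoneOn (Set.mem_Ici.mpr hℓ0.le)
        (Set.mem_Ici.mpr hTpos.le) hle
      rw [hcT] at h2
      linarith
    · intro hℓ
      refine ⟨lt_trans hTpos hℓ, ?_⟩
      have h2 : Real.cosh (2 * _root_.arcosh (a + 1) / 2) < Real.cosh (ℓ / 2) :=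
        coshHalf_strictMonoOn (Set.mem_Ici.mpr hTpos.le)
          (Set.mem_Ici.mpr (le_trans hTpos.le hℓ.le)) hℓ
      rw [hcT] at h2
      exact h2
  rw [MeasureTheory.setIntegral_indicator hmeas, hset]

def Gfun (v : ℝ) : ℝ := (v - 1) / 2 * Real.log ((v - 1) / 2) - ((v - 1) / 2 - 1)

def Afun (v : ℝ) : ℝ := Gfun (max v 3)

lemma areaInner {u₁ : ℝ} (hu₁ : 0 < u₁) (v : ℝ) :
    ∫ u₂ in Set.Ioi (1:ℝ),
        Set.indicator {u₂ : ℝ | 2 * u₁ * u₂ + 1 < v} (fun _ => (1:ℝ)) u₂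
      = max ((v - 1) / (2 * u₁) - 1) 0 := by
  have hset : {u₂ : ℝ | 2 * u₁ * u₂ + 1 < v} = Set.Iio ((v - 1) / (2 * u₁)) := by
    ext u₂
    simp only [Set.mem_setOf_eq, Set.mem_Iio]
    rw [lt_div_iff₀ (by linarith : 0 < 2 * u₁)]
    constructor <;> intro h <;> nlinarith
  rw [hset, MeasureTheory.setIntegral_indicator measurableSet_Iio]
  rw [Set.Ioi_inter_Iio]  -- Ioi 1 ∩ Iio b = Ioo 1 b
  simp only [MeasureTheory.setIntegral_const, smul_eq_mul, mul_one]
  exact Real.volume_real_Ioo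

lemma areaOuter (v : ℝ) :
    ∫ u in Set.Ioi (1:ℝ), max ((v - 1) / (2 * u) - 1) 0 = Afun v := by
  rcases le_or_gt v 3 with hv | hv
  · have hmax : max v 3 = 3 := max_eq_right hv
    have h0 : Afun v = 0 := by
      simp [Afun, hmax, Gfun]
      norm_num
    rw [h0]
    rw [show (0:ℝ) = ∫ _ in Set.Ioi (1:ℝ), (0:ℝ) from (MeasureTheory.integral_zero _ _).symm]
    apply MeasureTheory.setIntegral_congr_fun measurableSet_Ioi
    intro u hu
    simp only [Set.mem_Ioi] at hu
    have : (v - 1) / (2 * u) - 1 ≤ 0 := by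
      rw [sub_nonpos, div_le_one (by linarith)]
      nlinarith
    simp [max_eq_right this]
  · set c := (v - 1) / 2 with hc
    have hc1 : 1 < c := by rw [hc]; linarith
    have hmax : max v 3 = v := max_eq_left hv.le
    have hind : ∀ u ∈ Set.Ioi (1:ℝ), max ((v - 1) / (2 * u) - 1) 0
        = Set.indicator (Set.Iio c) (fun u => (v - 1) / (2 * u) - 1) u := by
      intro u hu
      simp only [Set.mem_Ioi] at hu
      rcases lt_or_ge u c with h | h
      · rw [Set.indicator_of_mem (Set.mem_Iio.mpr h)]
        have : 1 < (v - 1) / (2 * u) := by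
          rw [lt_div_iff₀ (by linarith)]
          nlinarith
        exact max_eq_left (by linarith)
      · rw [Set.indicator_of_notMem (by simpa using h)]
        have : (v - 1) / (2 * u) ≤ 1 := by
          rw [div_le_one (by linarith)]
          nlinarith
        exact max_eq_right (by linarith)
    rw [MeasureTheory.setIntegral_congr_fun measurableSet_Ioi hind,
      MeasureTheory.setIntegral_indicator measurableSet_Iio, Set.Ioi_inter_Iio,
      ← MeasureTheory.integral_Ioc_eq_integral_Ioo,
      ← intervalIntegral.integral_of_le hc1.le]
    have hint : ∀ u ∈ Set.uIcc (1:ℝ) c, u ≠ 0 := by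
      intro u hu
      rw [Set.uIcc_of_le hc1.le] at hu
      have := hu.1; intro h; rw [h] at this; linarith
    have h1 : IntervalIntegrable (fun u : ℝ => (v - 1) / 2 * (1 / u)) volume 1 c := by
      apply ContinuousOn.intervalIntegrable
      exact continuousOn_const.mul (continuousOn_const.div continuousOn_id
        (fun x hx => hint x hx))
    have h2 : IntervalIntegrable (fun _ : ℝ => (1:ℝ)) volume 1 c := intervalIntegrable_const
    have heq : (fun u : ℝ => (v - 1) / (2 * u) - 1)
        = fun u : ℝ => (v - 1) / 2 * (1 / u) - 1 := by
      funext u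
      rw [← div_div, div_eq_mul_one_div ((v - 1) / 2) u]
    rw [heq, intervalIntegral.integral_sub h1 h2, intervalIntegral.integral_const_mul,
      integral_one_div (fun h => (hint 0 h) rfl), integral_one]
    rw [Afun, hmax, Gfun, div_one]


lemma Gfun_three : Gfun 3 = 0 := by simp [Gfun]; norm_num

lemma continuous_Afun : Continuous Afun := by
  have hmax : Continuous fun v : ℝ => max v 3 := continuous_id.max continuous_const
  have hne : ∀ v : ℝ, (max v 3 - 1) / 2 ≠ 0 := by
    intro v
    have h3 : (3:ℝ) ≤ max v 3 := le_max_right _ _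
    have : (0:ℝ) < (max v 3 - 1) / 2 := by linarith
    exact ne_of_gt this
  have hlog : Continuous fun v : ℝ => Real.log ((max v 3 - 1) / 2) :=
    Continuous.log (((hmax.sub continuous_const).div_const 2)) hne
  have : Continuous fun v : ℝ =>
      (max v 3 - 1) / 2 * Real.log ((max v 3 - 1) / 2) - ((max v 3 - 1) / 2 - 1) :=
    (((hmax.sub continuous_const).div_const 2).mul hlog).sub
      (((hmax.sub continuous_const).div_const 2).sub continuous_const)
  exact this

def dens (ℓ : ℝ) : ℝ := 4 * Real.sinh (ℓ / 2) * Afun (Real.cosh (ℓ / 2))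

lemma continuous_dens : Continuous dens :=
  (continuous_const.mul (Real.continuous_sinh.comp (continuous_id.div_const 2))).mul
    (continuous_Afun.comp (Real.continuous_cosh.comp (continuous_id.div_const 2)))

def poly : Polynomial ℝ := Polynomial.C (-(Real.log 2) - 1/2) + Polynomial.C (1/4) * Polynomial.X

lemma poly_eval (ℓ : ℝ) : poly.eval ℓ = ℓ / 4 - Real.log 2 - 1/2 := by
  simp [poly]; ring

lemma log_two_le_one : Real.log 2 ≤ 1 := by
  have := Real.log_le_sub_one_of_pos (by norm_num : (0:ℝ) < 2); linarith

lemma log_two_nonneg : 0 ≤ Real.log 2 := Real.log_nonneg (by norm_num)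

set_option maxHeartbeats 1000000 in
lemma remainder_bound {ℓ : ℝ} (hℓ : 0 ≤ ℓ) :
    |dens ℓ - poly.eval ℓ * Real.exp ℓ| ≤ 20 * (ℓ + 1) * Real.exp (ℓ / 2) := by
  have hE0 : 0 < Real.exp (ℓ / 2) := Real.exp_pos _
  rcases le_or_gt (Real.cosh (ℓ / 2)) 3 with hv | hv
  · -- small case : density vanishes
    have hd : dens ℓ = 0 := by
      rw [dens, Afun, max_eq_right hv, Gfun_three, mul_zero]
    have hE6 : Real.exp (ℓ / 2) ≤ 6 := by
      have := Real.cosh_eq (ℓ / 2)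
      have h2 : 0 < Real.exp (-(ℓ / 2)) := Real.exp_pos _
      nlinarith
    have hp : |poly.eval ℓ| ≤ ℓ + 2 := by
      rw [poly_eval, abs_le]
      constructor <;> nlinarith [log_two_le_one, log_two_nonneg]
    have hexp : Real.exp ℓ = Real.exp (ℓ / 2) * Real.exp (ℓ / 2) := by
      rw [← Real.exp_add]; ring_nf
    rw [hd, zero_sub, abs_neg, abs_mul, Real.abs_exp, hexp]
    have h1 : |Polynomial.eval ℓ poly| * (Real.exp (ℓ / 2) * Real.exp (ℓ / 2))
        ≤ (ℓ + 2) * (6 * Real.exp (ℓ / 2)) := by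
      apply mul_le_mul hp (by nlinarith) (by positivity) (by linarith)
    nlinarith
  · -- main case
    set E := Real.exp (ℓ / 2) with hEdef
    set t := E⁻¹ with htdef
    have htE : t * E = 1 := inv_mul_cancel₀ (ne_of_gt hE0)
    have ht0 : 0 < t := inv_pos.mpr hE0
    have hℓ2 : 2 ≤ ℓ := by
      by_contra h
      push_neg at h
      have h1 : Real.cosh (ℓ / 2) ≤ Real.cosh 1 := by
        apply Real.cosh_strictMonoOn.monotoneOn (Set.mem_Ici.mpr (by linarith))
          (Set.mem_Ici.mpr zero_le_one) (by linarith)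
      have h2 : Real.cosh 1 < 3 := by
        rw [Real.cosh_eq]
        have := Real.exp_one_lt_d9
        have h3 : Real.exp (-1 : ℝ) ≤ 1 := by
          rw [show (1:ℝ) = Real.exp 0 from (Real.exp_zero).symm]
          exact Real.exp_le_exp.mpr (by norm_num)
        nlinarith
      linarith
    have hE2 : 2 ≤ E := by
      rw [hEdef]
      calc (2:ℝ) ≤ Real.exp 1 := by nlinarith [Real.add_one_le_exp (1:ℝ)]
      _ ≤ Real.exp (ℓ / 2) := Real.exp_le_exp.mpr (by linarith)
    have ht2 : t ≤ 1/2 := by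
      rw [htdef]
      rw [inv_le_comm₀ (by linarith) (by norm_num)]
      norm_num; linarith
    set ε := 2 * Real.log (1 - t) with hεdef
    have h1t : 0 < 1 - t := by linarith
    have hεneg : ε ≤ 0 := by
      have := Real.log_nonpos (by linarith) (by linarith : 1 - t ≤ 1)
      nlinarith
    have hεbound : |ε| ≤ 4 * t := by
      have hinv : (1 - t)⁻¹ ≤ 2 := by
        rw [inv_le_comm₀ h1t (by norm_num)]; linarith
      have hlog := Real.log_le_sub_one_of_pos (inv_pos.mpr h1t)
      rw [Real.log_inv] at hlog
      have h5 : (1 - t)⁻¹ - 1 ≤ 2 * t := by nlinarith [mul_inv_cancel₀ (ne_of_gt h1t)]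
      rw [abs_of_nonpos hεneg]
      nlinarith
    -- log identity
    have hcosh : Real.cosh (ℓ / 2) = (E + t) / 2 := by
      rw [Real.cosh_eq, hEdef, Real.exp_neg]
    have hsinh : Real.sinh (ℓ / 2) = (E - t) / 2 := by
      rw [Real.sinh_eq, hEdef, Real.exp_neg]
    have hfrac : (Real.cosh (ℓ / 2) - 1) / 2 = E * (1 - t) ^ 2 / 4 := by
      rw [hcosh]
      field_simp
      nlinarith [htE]
    have hlog : Real.log ((Real.cosh (ℓ / 2) - 1) / 2) = ℓ / 2 - 2 * Real.log 2 + ε := by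
      rw [hfrac]
      rw [show (4:ℝ) = 2 ^ 2 by norm_num]
      rw [Real.log_div (by positivity) (by norm_num),
        Real.log_mul (ne_of_gt hE0) (by positivity),
        Real.log_pow, Real.log_pow, hEdef, Real.log_exp, hεdef]
      push_cast
      ring
    have hAf : Afun (Real.cosh (ℓ / 2)) = Gfun (Real.cosh (ℓ / 2)) := by
      rw [Afun, max_eq_left hv.le]
    have hexp : Real.exp ℓ = E * E := by
      rw [hEdef, ← Real.exp_add]; ring_nf
    have hr : dens ℓ - poly.eval ℓ * Real.exp ℓ
        = E ^ 2 / 2 * ε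
          - (t ^ 2 + 2 * E - 2 * t) / 2 * (ℓ / 2 - 2 * Real.log 2 + ε)
          + (t ^ 2 / 2 + 3 * E - 3 * t) := by
      rw [dens, hAf, Gfun, hlog, hsinh, hcosh, poly_eval, hexp]
      ring
    rw [hr]
    clear_value E t ε
    clear hr hfrac hlog hcosh hsinh hAf hexp hεdef htdef hEdef hv
    have habs : |E ^ 2 / 2 * ε - (t ^ 2 + 2 * E - 2 * t) / 2 * (ℓ / 2 - 2 * Real.log 2 + ε)
          + (t ^ 2 / 2 + 3 * E - 3 * t)|
        ≤ |E ^ 2 / 2 * ε| + |(t ^ 2 + 2 * E - 2 * t) / 2 * (ℓ / 2 - 2 * Real.log 2 + ε)|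
          + |t ^ 2 / 2 + 3 * E - 3 * t| := by
      calc _ ≤ |E ^ 2 / 2 * ε - (t ^ 2 + 2 * E - 2 * t) / 2 * (ℓ / 2 - 2 * Real.log 2 + ε)|
            + |t ^ 2 / 2 + 3 * E - 3 * t| := abs_add_le _ _
      _ ≤ _ := by
        have := abs_sub (E ^ 2 / 2 * ε) ((t ^ 2 + 2 * E - 2 * t) / 2 * (ℓ / 2 - 2 * Real.log 2 + ε))
        linarith
    have hA : |E ^ 2 / 2 * ε| ≤ 2 * E := by
      rw [abs_mul, abs_of_nonneg (by positivity : (0:ℝ) ≤ E ^ 2 / 2)]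
      nlinarith [hεbound, abs_nonneg ε, htE]
    have hB : |(t ^ 2 + 2 * E - 2 * t) / 2 * (ℓ / 2 - 2 * Real.log 2 + ε)|
        ≤ E * ℓ + 8 * E := by
      rw [abs_mul]
      have hc1 : |(t ^ 2 + 2 * E - 2 * t) / 2| ≤ 2 * E := by
        rw [abs_of_nonneg (by nlinarith : (0:ℝ) ≤ (t ^ 2 + 2 * E - 2 * t) / 2)]
        nlinarith
      have hc2 : |ℓ / 2 - 2 * Real.log 2 + ε| ≤ ℓ / 2 + 4 := by
        rw [abs_le]
        constructor <;> nlinarith [log_two_le_one, log_two_nonneg, hεbound,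
          abs_nonneg ε, neg_abs_le ε, le_abs_self ε]
      calc |(t ^ 2 + 2 * E - 2 * t) / 2| * |ℓ / 2 - 2 * Real.log 2 + ε|
          ≤ 2 * E * (ℓ / 2 + 4) := by
            apply mul_le_mul hc1 hc2 (abs_nonneg _) (by linarith)
        _ = E * ℓ + 8 * E := by ring
    have hC : |t ^ 2 / 2 + 3 * E - 3 * t| ≤ 4 * E := by
      rw [abs_of_nonneg (by nlinarith : (0:ℝ) ≤ t ^ 2 / 2 + 3 * E - 3 * t)]
      nlinarith
    calc _ ≤ _ := habs
    _ ≤ 2 * E + (E * ℓ + 8 * E) + 4 * E := by linarith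
    _ ≤ 20 * (ℓ + 1) * E := by nlinarith

lemma continuous_r : Continuous (fun ℓ : ℝ => dens ℓ - poly.eval ℓ * Real.exp ℓ) :=
  continuous_dens.sub (poly.continuous_aeval.mul Real.continuous_exp)

lemma r_memRw : memRw (fun ℓ : ℝ => ((dens ℓ - poly.eval ℓ * Real.exp ℓ : ℝ) : ℂ)) := by
  refine ⟨1, zero_le_one, ?_, 40, by norm_num, ?_⟩
  · exact (Complex.continuous_ofReal.comp continuous_r).continuousOn
  · intro n hn
    have hn0 : (0:ℝ) ≤ (n:ℝ) := Nat.cast_nonneg n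
    have habs : ∀ s : ℝ, ‖((dens s - poly.eval s * Real.exp s : ℝ) : ℂ)‖
        = |dens s - poly.eval s * Real.exp s| := fun s => by rw [Complex.norm_real, Real.norm_eq_abs]
    have h1 : (∫ s in (0:ℝ)..(n:ℝ),
          ‖((dens s - poly.eval s * Real.exp s : ℝ) : ℂ)‖)
        = ∫ s in (0:ℝ)..(n:ℝ), |dens s - poly.eval s * Real.exp s| := by
      simp only [habs]
    rw [h1]
    have h2 : (∫ s in (0:ℝ)..(n:ℝ), |dens s - poly.eval s * Real.exp s|)
        ≤ ∫ s in (0:ℝ)..(n:ℝ), 20 * ((n:ℝ) + 1) * Real.exp (s / 2) := by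
      apply intervalIntegral.integral_mono_on hn0
      · exact (continuous_r.abs).intervalIntegrable _ _
      · exact (Continuous.intervalIntegrable (by continuity) _ _)
      · intro s hs
        have hs0 : 0 ≤ s := hs.1
        have hsn : s ≤ (n:ℝ) := hs.2
        calc |dens s - poly.eval s * Real.exp s| ≤ 20 * (s + 1) * Real.exp (s / 2) :=
              remainder_bound hs0
          _ ≤ 20 * ((n:ℝ) + 1) * Real.exp (s / 2) := by
              have := Real.exp_pos (s / 2); nlinarith
    have h3 : (∫ s in (0:ℝ)..(n:ℝ), 20 * ((n:ℝ) + 1) * Real.exp (s / 2))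
        = 20 * ((n:ℝ) + 1) * (2 * (Real.exp ((n:ℝ) / 2) - 1)) := by
      rw [intervalIntegral.integral_const_mul]
      have h4 : (∫ s in (0:ℝ)..(n:ℝ), Real.exp (s / 2))
          = 2 * (Real.exp ((n:ℝ) / 2) - 1) := by
        rw [intervalIntegral.integral_comp_div (f := Real.exp) (c := 2) two_ne_zero, integral_exp]
        norm_num
      rw [h4]
    rw [Real.rpow_one]
    have h5 : 20 * ((n:ℝ) + 1) * (2 * (Real.exp ((n:ℝ) / 2) - 1))
        ≤ 40 * ((n:ℝ) + 1) * Real.exp ((n:ℝ) / 2) := by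
      have := Real.exp_pos ((n:ℝ) / 2); nlinarith
    linarith

lemma continuous_arcosh_comp {α : Type*} [TopologicalSpace α] {g : α → ℝ}
    (hg : Continuous g) (h1 : ∀ x, 1 ≤ g x) : Continuous fun x => _root_.arcosh (g x) := by
  have hinner : Continuous fun x => g x + Real.sqrt ((g x) ^ 2 - 1) :=
    hg.add (Real.continuous_sqrt.comp ((hg.pow 2).sub continuous_const))
  apply Continuous.log hinner
  intro x
  have := h1 x
  have := Real.sqrt_nonneg ((g x) ^ 2 - 1)
  intro h; nlinarith

lemma continuous_L8 : Continuous fun q : ℝ × ℝ × ℝ => L8 q.1 q.2.1 q.2.2 := by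
  apply continuous_const.mul
  apply continuous_arcosh_comp
  · fun_prop
  · intro q
    have h1 := Real.one_le_cosh (q.1 / 2)
    have h2 := Real.one_le_cosh (q.2.1 / 2)
    have h3 := Real.one_le_cosh (q.2.2 / 2)
    nlinarith

lemma two_arcosh_cosh_half (x : ℝ) : 2 * _root_.arcosh (Real.cosh (x / 2)) = |x| := by
  have h : Real.cosh (x / 2) = Real.cosh (|x| / 2) := by
    rw [← Real.cosh_abs, abs_div, abs_two]
  rw [h, _root_.arcosh_cosh (by positivity)]
  field_simp

lemma abs_le_L8 (x₁ x₂ x₃ : ℝ) :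
    |x₁| ≤ L8 x₁ x₂ x₃ ∧ |x₂| ≤ L8 x₁ x₂ x₃ ∧ |x₃| ≤ L8 x₁ x₂ x₃ := by
  have h1 := Real.one_le_cosh (x₁ / 2)
  have h2 := Real.one_le_cosh (x₂ / 2)
  have h3 := Real.one_le_cosh (x₃ / 2)
  refine ⟨?_, ?_, ?_⟩
  · rw [L8, ← two_arcosh_cosh_half]
    have := _root_.arcosh_le_arcosh (a := Real.cosh (x₁ / 2)) (b := 2 * Real.cosh (x₁ / 2)
      * Real.cosh (x₂ / 2) + Real.cosh (x₃ / 2)) h1 (by nlinarith)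
    linarith
  · rw [L8, ← two_arcosh_cosh_half]
    have := _root_.arcosh_le_arcosh (a := Real.cosh (x₂ / 2)) (b := 2 * Real.cosh (x₁ / 2)
      * Real.cosh (x₂ / 2) + Real.cosh (x₃ / 2)) h2 (by nlinarith)
    linarith
  · rw [L8, ← two_arcosh_cosh_half]
    have := _root_.arcosh_le_arcosh (a := Real.cosh (x₃ / 2)) (b := 2 * Real.cosh (x₁ / 2)
      * Real.cosh (x₂ / 2) + Real.cosh (x₃ / 2)) h3 (by nlinarith)
    linarith

lemma exists_vanish {F : ℝ → ℝ} (hFc : HasCompactSupport F) :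
    ∃ M : ℝ, 0 ≤ M ∧ ∀ y : ℝ, M < |y| → F y = 0 := by
  obtain ⟨M, hM⟩ := hFc.isBounded.subset_closedBall 0
  refine ⟨max M 0, le_max_right _ _, fun y hy => ?_⟩
  apply image_eq_zero_of_notMem_tsupport
  intro hmem
  have h := hM hmem
  rw [Metric.mem_closedBall, Real.dist_eq, sub_zero] at h
  have : |y| ≤ max M 0 := le_trans h (le_max_left _ _)
  linarith

set_option maxHeartbeats 1000000 in
lemma integrable_phi {F : ℝ → ℝ} (hF : Continuous F) (hFc : HasCompactSupport F) :
    MeasureTheory.Integrable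
      (fun q : ℝ × ℝ × ℝ => F (L8 q.1 q.2.1 q.2.2) *
        (Real.sinh (q.1 / 2) * Real.sinh (q.2.1 / 2) * Real.sinh (q.2.2 / 2))) := by
  obtain ⟨M, hM0, hMv⟩ := exists_vanish hFc
  have hcont : Continuous (fun q : ℝ × ℝ × ℝ => F (L8 q.1 q.2.1 q.2.2) *
      (Real.sinh (q.1 / 2) * Real.sinh (q.2.1 / 2) * Real.sinh (q.2.2 / 2))) := by
    apply (hF.comp continuous_L8).mul
    fun_prop
  apply hcont.integrable_of_hasCompactSupport
  apply HasCompactSupport.intro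
    (isCompact_Icc.prod (isCompact_Icc.prod isCompact_Icc) :
      IsCompact ((Set.Icc (-M) M) ×ˢ ((Set.Icc (-M) M) ×ˢ (Set.Icc (-M) M))))
  intro q hq
  have hL := abs_le_L8 q.1 q.2.1 q.2.2
  have : M < |q.1| ∨ M < |q.2.1| ∨ M < |q.2.2| := by
    by_contra h
    push_neg at h
    exact hq ⟨Set.mem_Icc.mpr (abs_le.mp h.1), Set.mem_Icc.mpr (abs_le.mp h.2.1),
      Set.mem_Icc.mpr (abs_le.mp h.2.2)⟩
  have hML : M < L8 q.1 q.2.1 q.2.2 := by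
    rcases this with h | h | h
    · exact lt_of_lt_of_le h hL.1
    · exact lt_of_lt_of_le h hL.2.1
    · exact lt_of_lt_of_le h hL.2.2
  have : F (L8 q.1 q.2.1 q.2.2) = 0 := by
    apply hMv
    rw [abs_of_nonneg (by linarith : (0:ℝ) ≤ L8 q.1 q.2.1 q.2.2)]
    exact hML
  rw [this, zero_mul]

set_option maxHeartbeats 1000000 in
lemma integrable_phi_slice {F : ℝ → ℝ} (hF : Continuous F) (hFc : HasCompactSupport F)
    (x₁ : ℝ) :
    MeasureTheory.Integrable
      (fun q : ℝ × ℝ => F (L8 x₁ q.1 q.2) *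
        (Real.sinh (x₁ / 2) * Real.sinh (q.1 / 2) * Real.sinh (q.2 / 2))) := by
  obtain ⟨M, hM0, hMv⟩ := exists_vanish hFc
  have hcont : Continuous (fun q : ℝ × ℝ => F (L8 x₁ q.1 q.2) *
      (Real.sinh (x₁ / 2) * Real.sinh (q.1 / 2) * Real.sinh (q.2 / 2))) := by
    have : Continuous fun q : ℝ × ℝ => L8 x₁ q.1 q.2 := by
      apply continuous_const.mul
      apply continuous_arcosh_comp
      · fun_prop
      · intro q
        have h1 := Real.one_le_cosh (x₁ / 2)
        have h2 := Real.one_le_cosh (q.1 / 2)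
        have h3 := Real.one_le_cosh (q.2 / 2)
        nlinarith
    exact (hF.comp this).mul (by fun_prop)
  apply hcont.integrable_of_hasCompactSupport
  apply HasCompactSupport.intro
    (isCompact_Icc.prod isCompact_Icc :
      IsCompact ((Set.Icc (-M) M) ×ˢ (Set.Icc (-M) M)))
  intro q hq
  have hL := abs_le_L8 x₁ q.1 q.2
  have : M < |q.1| ∨ M < |q.2| := by
    by_contra h
    push_neg at h
    exact hq ⟨Set.mem_Icc.mpr (abs_le.mp h.1), Set.mem_Icc.mpr (abs_le.mp h.2)⟩
  have hML : M < L8 x₁ q.1 q.2 := by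
    rcases this with h | h
    · exact lt_of_lt_of_le h hL.2.1
    · exact lt_of_lt_of_le h hL.2.2
  have hz : F (L8 x₁ q.1 q.2) = 0 := by
    apply hMv
    rw [abs_of_nonneg (by nlinarith [abs_nonneg x₁, hL.1] : (0:ℝ) ≤ L8 x₁ q.1 q.2)]
    exact hML
  rw [hz, zero_mul]

def Jfun (F : ℝ → ℝ) (w : ℝ) : ℝ :=
  ∫ ℓ in Set.Ioi (0:ℝ),
    Set.indicator {ℓ : ℝ | w + 1 < Real.cosh (ℓ / 2)}
      (fun ℓ => Real.sinh (ℓ / 2) / 2 * F ℓ) ℓ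

lemma chainA (F : ℝ → ℝ) {a : ℝ} (ha : 1 ≤ a) :
    ∫ x in Set.Ioi (0:ℝ), Real.sinh (x / 2) * F (2 * _root_.arcosh (a + Real.cosh (x / 2)))
      = 2 * Jfun F a := by
  have h1 := sub1 (fun u => F (2 * _root_.arcosh (a + u)))
  rw [h1, sub2 F ha, indicator_form F ha, Jfun]

set_option maxHeartbeats 2000000 in
lemma final_swap {F : ℝ → ℝ} (hF : Continuous F) (hFc : HasCompactSupport F) :
    (8:ℝ) * ∫ u₁ in Set.Ioi (1:ℝ), ∫ u₂ in Set.Ioi (1:ℝ), Jfun F (2 * u₁ * u₂)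
      = ∫ ℓ in Set.Ioi (0:ℝ), F ℓ * dens ℓ := by
  obtain ⟨M, hM0, hMv⟩ := exists_vanish hFc
  obtain ⟨C, hC⟩ := hF.bounded_above_of_compact_support hFc
  have hC0 : 0 ≤ C := le_trans (norm_nonneg (F 0)) (hC 0)
  set B := Real.cosh (M / 2) with hB
  have hB1 : 1 ≤ B := Real.one_le_cosh _
  have hshM : 0 ≤ Real.sinh (M / 2) := Real.sinh_nonneg_iff.mpr (by linarith)
  -- vanishing + bounds for the basic integrand
  have hFb : ∀ ℓ : ℝ, 0 < ℓ → F ℓ ≠ 0 → ℓ ≤ M ∧ Real.cosh (ℓ / 2) ≤ B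
      ∧ |Real.sinh (ℓ / 2) / 2 * F ℓ| ≤ Real.sinh (M / 2) / 2 * C := by
    intro ℓ hℓ hFne
    have hℓM : ℓ ≤ M := by
      by_contra h
      push_neg at h
      exact hFne (hMv ℓ (by rw [abs_of_pos hℓ]; linarith))
    have hcosh : Real.cosh (ℓ / 2) ≤ B := by
      rw [hB]
      exact Real.cosh_strictMonoOn.monotoneOn (Set.mem_Ici.mpr (by linarith))
        (Set.mem_Ici.mpr (by linarith)) (by linarith)
    refine ⟨hℓM, hcosh, ?_⟩
    rw [abs_mul]
    apply mul_le_mul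
    · have h1 : 0 ≤ Real.sinh (ℓ / 2) := Real.sinh_nonneg_iff.mpr (by linarith)
      have h2 : Real.sinh (ℓ / 2) ≤ Real.sinh (M / 2) :=
        Real.sinh_le_sinh.mpr (by linarith)
      rw [abs_of_nonneg (by linarith : (0:ℝ) ≤ Real.sinh (ℓ / 2) / 2)]
      linarith
    · rw [← Real.norm_eq_abs]; exact hC ℓ -- note hC gives ‖F ℓ‖ ≤ C
    · exact abs_nonneg _
    · linarith
  -- step 1 : for each fixed u₁ > 1 swap u₂ and ℓ and compute the u₂ integral
  have step1 : ∀ u₁ ∈ Set.Ioi (1:ℝ),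
      (∫ u₂ in Set.Ioi (1:ℝ), Jfun F (2 * u₁ * u₂))
        = ∫ ℓ in Set.Ioi (0:ℝ), Real.sinh (ℓ / 2) / 2 * F ℓ
            * max ((Real.cosh (ℓ / 2) - 1) / (2 * u₁) - 1) 0 := by
    intro u₁ hu₁
    simp only [Set.mem_Ioi] at hu₁
    set Φ : ℝ × ℝ → ℝ := fun q =>
      Set.indicator {q' : ℝ × ℝ | 2 * u₁ * q'.1 + 1 < Real.cosh (q'.2 / 2)}
        (fun q' => Real.sinh (q'.2 / 2) / 2 * F q'.2) q with hΦdef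
    have hΦpt : ∀ u₂ ℓ : ℝ,
        Set.indicator {ℓ : ℝ | 2 * u₁ * u₂ + 1 < Real.cosh (ℓ / 2)}
          (fun ℓ => Real.sinh (ℓ / 2) / 2 * F ℓ) ℓ = Φ (u₂, ℓ) := by
      intro u₂ ℓ
      rw [hΦdef]
      simp only [Set.indicator_apply, Set.mem_setOf_eq]
    have hO : MeasurableSet {q' : ℝ × ℝ | 2 * u₁ * q'.1 + 1 < Real.cosh (q'.2 / 2)} := by
      apply IsOpen.measurableSet
      apply isOpen_lt (by fun_prop) (by fun_prop)
    have hΦmeas : MeasureTheory.AEStronglyMeasurable Φ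
        (((volume : Measure ℝ).restrict (Set.Ioi 1)).prod
          ((volume : Measure ℝ).restrict (Set.Ioi 0))) := by
      apply MeasureTheory.AEStronglyMeasurable.indicator _ hO
      apply Continuous.aestronglyMeasurable
      fun_prop
    have hbox : MeasureTheory.Integrable
        ((Set.Icc (1:ℝ) B ×ˢ Set.Icc (0:ℝ) M).indicator
          (fun _ => Real.sinh (M / 2) / 2 * C))
        (((volume : Measure ℝ).restrict (Set.Ioi 1)).prod
          ((volume : Measure ℝ).restrict (Set.Ioi 0))) := by
      rw [MeasureTheory.Measure.prod_restrict]
      apply MeasureTheory.Integrable.restrict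
      rw [MeasureTheory.integrable_indicator_iff (measurableSet_Icc.prod measurableSet_Icc)]
      apply (MeasureTheory.integrableOn_const_iff).mpr
      right
      rw [← MeasureTheory.Measure.volume_eq_prod, Measure.volume_eq_prod,
        MeasureTheory.Measure.prod_prod]
      exact ENNReal.mul_lt_top (by simp [Real.volume_Icc]) (by simp [Real.volume_Icc])
    have hΦint : MeasureTheory.Integrable Φ
        (((volume : Measure ℝ).restrict (Set.Ioi 1)).prod
          ((volume : Measure ℝ).restrict (Set.Ioi 0))) := by
      apply MeasureTheory.Integrable.mono' hbox hΦmeas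
      rw [MeasureTheory.Measure.prod_restrict,
        MeasureTheory.ae_restrict_iff' (measurableSet_Ioi.prod measurableSet_Ioi)]
      apply MeasureTheory.ae_of_all
      rintro ⟨u₂, ℓ⟩ hq
      simp only [Set.mem_prod, Set.mem_Ioi] at hq
      obtain ⟨hu₂, hℓ⟩ := hq
      by_cases hcond : 2 * u₁ * u₂ + 1 < Real.cosh (ℓ / 2)
      · have hΦv : Φ (u₂, ℓ) = Real.sinh (ℓ / 2) / 2 * F ℓ := by
          rw [hΦdef]
          exact Set.indicator_of_mem (Set.mem_setOf_eq ▸ hcond) _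
        rw [hΦv]
        by_cases hFz : F ℓ = 0
        · rw [hFz, mul_zero, norm_zero]
          apply Set.indicator_nonneg (fun _ _ => by positivity)
        · obtain ⟨hℓM, hcosh, habs⟩ := hFb ℓ hℓ hFz
          have hmem : (u₂, ℓ) ∈ Set.Icc (1:ℝ) B ×ˢ Set.Icc (0:ℝ) M := by
            refine ⟨⟨hu₂.le, ?_⟩, hℓ.le, hℓM⟩
            nlinarith
          rw [Set.indicator_of_mem hmem, Real.norm_eq_abs]
          exact habs
      · have hΦv : Φ (u₂, ℓ) = 0 := by
          rw [hΦdef]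
          exact Set.indicator_of_notMem (by simpa using hcond) _
        rw [hΦv, norm_zero]
        apply Set.indicator_nonneg (fun _ _ => by positivity)
    calc (∫ u₂ in Set.Ioi (1:ℝ), Jfun F (2 * u₁ * u₂))
        = ∫ u₂ in Set.Ioi (1:ℝ), ∫ ℓ in Set.Ioi (0:ℝ), Φ (u₂, ℓ) := by
          apply MeasureTheory.setIntegral_congr_fun measurableSet_Ioi
          intro u₂ _
          beta_reduce
          simp only [Jfun]
          exact MeasureTheory.setIntegral_congr_fun measurableSet_Ioi
            (fun ℓ _ => hΦpt u₂ ℓ)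
      _ = ∫ ℓ in Set.Ioi (0:ℝ), ∫ u₂ in Set.Ioi (1:ℝ), Φ (u₂, ℓ) :=
          MeasureTheory.integral_integral_swap hΦint
      _ = ∫ ℓ in Set.Ioi (0:ℝ), Real.sinh (ℓ / 2) / 2 * F ℓ
            * max ((Real.cosh (ℓ / 2) - 1) / (2 * u₁) - 1) 0 := by
          apply MeasureTheory.setIntegral_congr_fun measurableSet_Ioi
          intro ℓ _
          beta_reduce
          have hpt : ∀ u₂ : ℝ, Φ (u₂, ℓ)
              = Real.sinh (ℓ / 2) / 2 * F ℓ *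
                Set.indicator {u₂ : ℝ | 2 * u₁ * u₂ + 1 < Real.cosh (ℓ / 2)}
                  (fun _ => (1:ℝ)) u₂ := by
            intro u₂
            rw [hΦdef]
            simp only [Set.indicator_apply, Set.mem_setOf_eq]
            split_ifs <;> ring
          rw [MeasureTheory.setIntegral_congr_fun measurableSet_Ioi
            (fun u₂ _ => hpt u₂), MeasureTheory.integral_const_mul,
            areaInner (by linarith : (0:ℝ) < u₁) (Real.cosh (ℓ / 2))]
  rw [MeasureTheory.setIntegral_congr_fun measurableSet_Ioi step1]
  -- step 2 : swap u₁ and ℓ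
  set K : ℝ × ℝ → ℝ := fun q =>
    Real.sinh (q.2 / 2) / 2 * F q.2
      * max ((Real.cosh (q.2 / 2) - 1) / (2 * q.1) - 1) 0 with hKdef
  have hKmeas : MeasureTheory.AEStronglyMeasurable K
      (((volume : Measure ℝ).restrict (Set.Ioi 1)).prod
        ((volume : Measure ℝ).restrict (Set.Ioi 0))) := by
    apply Measurable.aestronglyMeasurable
    apply Measurable.mul
    · exact ((Real.measurable_sinh.comp (measurable_snd.div_const 2)).div_const 2).mul
        (hF.measurable.comp measurable_snd)
    · exact ((((Real.measurable_cosh.comp (measurable_snd.div_const 2)).sub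
        measurable_const).div (measurable_fst.const_mul 2)).sub measurable_const).max
        measurable_const
  have hbox2 : MeasureTheory.Integrable
      ((Set.Icc (1:ℝ) B ×ˢ Set.Icc (0:ℝ) M).indicator
        (fun _ => Real.sinh (M / 2) / 2 * C * B))
      (((volume : Measure ℝ).restrict (Set.Ioi 1)).prod
        ((volume : Measure ℝ).restrict (Set.Ioi 0))) := by
    rw [MeasureTheory.Measure.prod_restrict]
    apply MeasureTheory.Integrable.restrict
    rw [MeasureTheory.integrable_indicator_iff (measurableSet_Icc.prod measurableSet_Icc)]
    apply (MeasureTheory.integrableOn_const_iff).mpr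
    right
    rw [← MeasureTheory.Measure.volume_eq_prod, Measure.volume_eq_prod,
      MeasureTheory.Measure.prod_prod]
    exact ENNReal.mul_lt_top (by simp [Real.volume_Icc]) (by simp [Real.volume_Icc])
  have hKint : MeasureTheory.Integrable K
      (((volume : Measure ℝ).restrict (Set.Ioi 1)).prod
        ((volume : Measure ℝ).restrict (Set.Ioi 0))) := by
    apply MeasureTheory.Integrable.mono' hbox2 hKmeas
    rw [MeasureTheory.Measure.prod_restrict,
      MeasureTheory.ae_restrict_iff' (measurableSet_Ioi.prod measurableSet_Ioi)]
    apply MeasureTheory.ae_of_all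
    rintro ⟨u₁, ℓ⟩ hq
    simp only [Set.mem_prod, Set.mem_Ioi] at hq
    obtain ⟨hu₁, hℓ⟩ := hq
    have hKv : K (u₁, ℓ) = Real.sinh (ℓ / 2) / 2 * F ℓ
        * max ((Real.cosh (ℓ / 2) - 1) / (2 * u₁) - 1) 0 := by rw [hKdef]
    rw [hKv]
    by_cases hFz : F ℓ = 0
    · rw [hFz, mul_zero, zero_mul, norm_zero]
      apply Set.indicator_nonneg (fun _ _ => by positivity)
    rcases le_or_gt ((Real.cosh (ℓ / 2) - 1) / (2 * u₁) - 1) 0 with hmx | hmx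
    · rw [max_eq_right hmx, mul_zero, norm_zero]
      apply Set.indicator_nonneg (fun _ _ => by positivity)
    obtain ⟨hℓM, hcosh, habs⟩ := hFb ℓ hℓ hFz
    have hu₁B : u₁ ≤ B := by
      have h1 : 2 * u₁ < Real.cosh (ℓ / 2) - 1 := by
        have h2 : (1:ℝ) < (Real.cosh (ℓ / 2) - 1) / (2 * u₁) := by linarith
        rw [lt_div_iff₀ (by linarith : (0:ℝ) < 2 * u₁)] at h2
        linarith
      nlinarith
    have hmem : ((u₁, ℓ) : ℝ × ℝ) ∈ Set.Icc (1:ℝ) B ×ˢ Set.Icc (0:ℝ) M :=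
      ⟨⟨hu₁.le, hu₁B⟩, ⟨hℓ.le, hℓM⟩⟩
    rw [Set.indicator_of_mem hmem]
    have hmax : max ((Real.cosh (ℓ / 2) - 1) / (2 * u₁) - 1) 0 ≤ B := by
      rw [max_le_iff]
      constructor
      · have h3 : (Real.cosh (ℓ / 2) - 1) / (2 * u₁) ≤ B + 1 := by
          rw [div_le_iff₀ (by linarith : (0:ℝ) < 2 * u₁)]
          nlinarith
        linarith
      · linarith
    rw [Real.norm_eq_abs, abs_mul]
    calc |Real.sinh (ℓ / 2) / 2 * F ℓ| * |max ((Real.cosh (ℓ / 2) - 1) / (2 * u₁) - 1) 0|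
        ≤ (Real.sinh (M / 2) / 2 * C) * B := by
          apply mul_le_mul habs _ (abs_nonneg _) (by positivity)
          rw [abs_of_nonneg (le_max_right _ _)]
          exact hmax
      _ = Real.sinh (M / 2) / 2 * C * B := by ring
  rw [MeasureTheory.integral_integral_swap hKint]
  rw [← MeasureTheory.integral_const_mul]
  apply MeasureTheory.setIntegral_congr_fun measurableSet_Ioi
  intro ℓ _
  simp only
  rw [MeasureTheory.integral_const_mul, areaOuter (Real.cosh (ℓ / 2))]
  rw [dens, Afun]
  have : max (Real.cosh (ℓ / 2)) 3 = max (Real.cosh (ℓ / 2)) 3 := rfl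
  ring

set_option maxHeartbeats 2000000 in
lemma main_identity {F : ℝ → ℝ} (hF : Continuous F) (hFc : HasCompactSupport F) :
    (∫ q in (Set.Ioi (0:ℝ)) ×ˢ ((Set.Ioi (0:ℝ)) ×ˢ (Set.Ioi (0:ℝ))),
        F (L8 q.1 q.2.1 q.2.2) *
          (Real.sinh (q.1 / 2) * Real.sinh (q.2.1 / 2) * Real.sinh (q.2.2 / 2)))
      = ∫ ℓ in Set.Ioi (0:ℝ), F ℓ * dens ℓ := by
  have hint1 : MeasureTheory.IntegrableOn
      (fun q : ℝ × ℝ × ℝ => F (L8 q.1 q.2.1 q.2.2) *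
        (Real.sinh (q.1 / 2) * Real.sinh (q.2.1 / 2) * Real.sinh (q.2.2 / 2)))
      ((Set.Ioi (0:ℝ)) ×ˢ ((Set.Ioi (0:ℝ)) ×ˢ (Set.Ioi (0:ℝ))))
      ((volume : Measure ℝ).prod (volume : Measure (ℝ × ℝ))) := by
    rw [← MeasureTheory.Measure.volume_eq_prod]
    exact (integrable_phi hF hFc).integrableOn
  rw [MeasureTheory.Measure.volume_eq_prod, MeasureTheory.setIntegral_prod _ hint1]
  have hx₁ : ∀ x₁ ∈ Set.Ioi (0:ℝ),
      (∫ q in (Set.Ioi (0:ℝ)) ×ˢ (Set.Ioi (0:ℝ)),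
          F (L8 x₁ q.1 q.2) *
            (Real.sinh (x₁ / 2) * Real.sinh (q.1 / 2) * Real.sinh (q.2 / 2)))
        = Real.sinh (x₁ / 2) *
            (4 * ∫ u₂ in Set.Ioi (1:ℝ), Jfun F (2 * Real.cosh (x₁ / 2) * u₂)) := by
    intro x₁ _
    have hint2 : MeasureTheory.IntegrableOn
        (fun q : ℝ × ℝ => F (L8 x₁ q.1 q.2) *
          (Real.sinh (x₁ / 2) * Real.sinh (q.1 / 2) * Real.sinh (q.2 / 2)))
        ((Set.Ioi (0:ℝ)) ×ˢ (Set.Ioi (0:ℝ)))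
        ((volume : Measure ℝ).prod (volume : Measure ℝ)) := by
      rw [← MeasureTheory.Measure.volume_eq_prod]
      exact (integrable_phi_slice hF hFc x₁).integrableOn
    rw [MeasureTheory.Measure.volume_eq_prod, MeasureTheory.setIntegral_prod _ hint2]
    have hx₂ : ∀ x₂ ∈ Set.Ioi (0:ℝ),
        (∫ x₃ in Set.Ioi (0:ℝ), F (L8 x₁ x₂ x₃) *
            (Real.sinh (x₁ / 2) * Real.sinh (x₂ / 2) * Real.sinh (x₃ / 2)))
          = Real.sinh (x₁ / 2) * (Real.sinh (x₂ / 2) *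
              (2 * Jfun F (2 * Real.cosh (x₁ / 2) * Real.cosh (x₂ / 2)))) := by
      intro x₂ _
      have hpt : ∀ x₃ : ℝ, F (L8 x₁ x₂ x₃) *
          (Real.sinh (x₁ / 2) * Real.sinh (x₂ / 2) * Real.sinh (x₃ / 2))
          = (Real.sinh (x₁ / 2) * Real.sinh (x₂ / 2)) *
            (Real.sinh (x₃ / 2) * F (2 * _root_.arcosh (2 * Real.cosh (x₁ / 2) *
              Real.cosh (x₂ / 2) + Real.cosh (x₃ / 2)))) := by
        intro x₃; rw [L8]; ring
      have ha : (1:ℝ) ≤ 2 * Real.cosh (x₁ / 2) * Real.cosh (x₂ / 2) := by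
        have h1 := Real.one_le_cosh (x₁ / 2)
        have h2 := Real.one_le_cosh (x₂ / 2)
        nlinarith
      rw [MeasureTheory.setIntegral_congr_fun measurableSet_Ioi (fun x₃ _ => hpt x₃),
        MeasureTheory.integral_const_mul, chainA F ha]
      ring
    rw [MeasureTheory.setIntegral_congr_fun measurableSet_Ioi hx₂,
      MeasureTheory.integral_const_mul]
    have h2 := sub1 (fun u => 2 * Jfun F (2 * Real.cosh (x₁ / 2) * u))
    rw [h2, MeasureTheory.integral_const_mul]
    ring
  rw [MeasureTheory.setIntegral_congr_fun measurableSet_Ioi hx₁]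
  have h1 := sub1 (fun u => 4 * ∫ u₂ in Set.Ioi (1:ℝ), Jfun F (2 * u * u₂))
  rw [h1, MeasureTheory.integral_const_mul]
  rw [show (2:ℝ) * (4 * ∫ u₁ in Set.Ioi (1:ℝ), ∫ u₂ in Set.Ioi (1:ℝ), Jfun F (2 * u₁ * u₂))
      = 8 * ∫ u₁ in Set.Ioi (1:ℝ), ∫ u₂ in Set.Ioi (1:ℝ), Jfun F (2 * u₁ * u₂) by ring]
  exact final_swap hF hFc

/-- the pushforward under `𝔏₈` of the measure
`sinh(x₁/2)sinh(x₂/2)sinh(x₃/2) dx₁dx₂dx₃` on `(0,∞)³` admits a density which is a weak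
Friedman–Ramanujan function. -/
theorem figure_eight_density_FR :
    ∃ (f : ℝ → ℝ) (p : Polynomial ℝ) (r : ℝ → ℝ),
      ContinuousOn f (Set.Ici 0) ∧
      memRw (fun ℓ : ℝ => (r ℓ : ℂ)) ∧
      (∀ ℓ : ℝ, 0 ≤ ℓ → f ℓ = p.eval ℓ * Real.exp ℓ + r ℓ) ∧
      ∀ F : ℝ → ℝ, Continuous F → HasCompactSupport F →
        (∫ p in {p : ℝ × ℝ × ℝ | 0 < p.1 ∧ 0 < p.2.1 ∧ 0 < p.2.2},
            F (L8 p.1 p.2.1 p.2.2) *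
              (Real.sinh (p.1 / 2) * Real.sinh (p.2.1 / 2) * Real.sinh (p.2.2 / 2)))
          = ∫ ℓ in Set.Ioi (0:ℝ), F ℓ * f ℓ := by
  refine ⟨dens, poly, fun ℓ => dens ℓ - poly.eval ℓ * Real.exp ℓ, ?_, ?_, ?_, ?_⟩
  · exact continuous_dens.continuousOn
  · exact r_memRw
  · intro ℓ _
    ring
  · intro F hF hFc
    have hset : {p : ℝ × ℝ × ℝ | 0 < p.1 ∧ 0 < p.2.1 ∧ 0 < p.2.2}
        = (Set.Ioi (0:ℝ)) ×ˢ ((Set.Ioi (0:ℝ)) ×ˢ (Set.Ioi (0:ℝ))) := by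
      ext q
      simp [Set.mem_prod]
    rw [hset]
    exact main_identity hF hFc
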